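/- For a regular point x of a differentiable orientation-preserving homeomorphism f with positive Jacobian, the following chain of inequalities holds: 1/K_f(x) ≤ 1/L_f(x)^{1/(n-1)} ≤ 1/D_f(x,x_0)^{1/(n-1)} ≤ Q_f(x,x_0) ≤ K_f(x)^{1/(n-1)} ≤ L_f(x). -/

import Mathlib

open Set MeasureTheory Metric ENNReal

noncomputable def maxStretch {n : ℕ} (A : EuclideanSpace ℝ (Fin n) →L[ℝ] EuclideanSpace ℝ (Fin n)) : ℝ :=
  sSup {r : ℝ | ∃ h : EuclideanSpace ℝ (Fin n), ‖h‖ = 1 ∧ r = ‖A h‖}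

noncomputable def minStretch {n : ℕ} (A : EuclideanSpace ℝ (Fin n) →L[ℝ] EuclideanSpace ℝ (Fin n)) : ℝ :=
  sInf {r : ℝ | ∃ h : EuclideanSpace ℝ (Fin n), ‖h‖ = 1 ∧ r = ‖A h‖}

/-- The Jacobian determinant of a linear map. -/
noncomputable def jac {n : ℕ} (A : EuclideanSpace ℝ (Fin n) →L[ℝ] EuclideanSpace ℝ (Fin n)) : ℝ :=
  LinearMap.det (A : EuclideanSpace ℝ (Fin n) →ₗ[ℝ] EuclideanSpace ℝ (Fin n))

/-- The outer dilatation K_f(x) = ‖f'(x)‖ⁿ/J_f(x). -/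
noncomputable def Kdil {n : ℕ} (A : EuclideanSpace ℝ (Fin n) →L[ℝ] EuclideanSpace ℝ (Fin n)) : ℝ :=
  maxStretch A ^ n / jac A

/-- The inner dilatation L_f(x) = J_f(x)/l_f(x)ⁿ. -/
noncomputable def Ldil {n : ℕ} (A : EuclideanSpace ℝ (Fin n) →L[ℝ] EuclideanSpace ℝ (Fin n)) : ℝ :=
  jac A / minStretch A ^ n

/-- ℓ_f(x,x₀) = min over unit h with h·u ≠ 0 of |f'(x)h|/|h·u|. -/
noncomputable def ellAng {n : ℕ} (A : EuclideanSpace ℝ (Fin n) →L[ℝ] EuclideanSpace ℝ (Fin n))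
    (u : EuclideanSpace ℝ (Fin n)) : ℝ :=
  sInf {r : ℝ | ∃ h : EuclideanSpace ℝ (Fin n),
    ‖h‖ = 1 ∧ (inner ℝ h u : ℝ) ≠ 0 ∧ r = ‖A h‖ / |(inner ℝ h u : ℝ)|}

/-- The angular dilatation D_f(x,x₀) = J_f(x)/ℓ_f(x,x₀)ⁿ. -/
noncomputable def Ddil {n : ℕ} (A : EuclideanSpace ℝ (Fin n) →L[ℝ] EuclideanSpace ℝ (Fin n))
    (u : EuclideanSpace ℝ (Fin n)) : ℝ :=
  jac A / ellAng A u ^ n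

/-- The normal dilatation Q_f(x,x₀) = (|∂_u f(x)|ⁿ/J_f(x))^{1/(n-1)}. -/
noncomputable def Qdil {n : ℕ} (A : EuclideanSpace ℝ (Fin n) →L[ℝ] EuclideanSpace ℝ (Fin n))
    (u : EuclideanSpace ℝ (Fin n)) : ℝ :=
  (‖A u‖ ^ n / jac A) ^ ((1:ℝ) / ((n : ℝ) - 1))

/-- The spherical annulus A(a,b) = {a < |x| < b}. -/
noncomputable def ann (n : ℕ) (a b : ℝ) : Set (EuclideanSpace ℝ (Fin n)) :=
  {x | a < ‖x‖ ∧ ‖x‖ < b}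

/-- The area ω_{n-1} of the unit sphere S^{n-1} in ℝⁿ. -/
noncomputable def sphereArea (n : ℕ) : ℝ :=
  n * (volume (Metric.ball (0 : EuclideanSpace ℝ (Fin n)) 1)).toReal


section Aux

variable {n : ℕ}

private lemma stretchSet_eq (A : EuclideanSpace ℝ (Fin n) →L[ℝ] EuclideanSpace ℝ (Fin n)) :
    {r : ℝ | ∃ h : EuclideanSpace ℝ (Fin n), ‖h‖ = 1 ∧ r = ‖A h‖}
      = (fun h => ‖A h‖) '' Metric.sphere (0 : EuclideanSpace ℝ (Fin n)) 1 := by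
  ext r
  constructor
  · rintro ⟨h, hh, rfl⟩; exact ⟨h, by simpa [mem_sphere_zero_iff_norm] using hh, rfl⟩
  · rintro ⟨h, hh, rfl⟩; exact ⟨h, by simpa [mem_sphere_zero_iff_norm] using hh, rfl⟩

private lemma stretchSet_compact (A : EuclideanSpace ℝ (Fin n) →L[ℝ] EuclideanSpace ℝ (Fin n)) :
    IsCompact {r : ℝ | ∃ h : EuclideanSpace ℝ (Fin n), ‖h‖ = 1 ∧ r = ‖A h‖} := by
  rw [stretchSet_eq]
  exact (isCompact_sphere (0 : EuclideanSpace ℝ (Fin n)) 1).image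
    (continuous_norm.comp A.continuous)

private lemma stretchSet_bddBelow (A : EuclideanSpace ℝ (Fin n) →L[ℝ] EuclideanSpace ℝ (Fin n)) :
    BddBelow {r : ℝ | ∃ h : EuclideanSpace ℝ (Fin n), ‖h‖ = 1 ∧ r = ‖A h‖} := by
  refine ⟨0, ?_⟩
  rintro r ⟨h, -, rfl⟩
  exact norm_nonneg _

private lemma minStretch_le (A : EuclideanSpace ℝ (Fin n) →L[ℝ] EuclideanSpace ℝ (Fin n))
    (h : EuclideanSpace ℝ (Fin n)) (hh : ‖h‖ = 1) : minStretch A ≤ ‖A h‖ :=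
  csInf_le (stretchSet_bddBelow A) ⟨h, hh, rfl⟩

private lemma le_maxStretch (A : EuclideanSpace ℝ (Fin n) →L[ℝ] EuclideanSpace ℝ (Fin n))
    (h : EuclideanSpace ℝ (Fin n)) (hh : ‖h‖ = 1) : ‖A h‖ ≤ maxStretch A :=
  le_csSup (stretchSet_compact A).bddAbove ⟨h, hh, rfl⟩

private lemma exists_unit (hn : 2 ≤ n) : ∃ h : EuclideanSpace ℝ (Fin n), ‖h‖ = 1 :=
  ⟨EuclideanSpace.single (⟨0, by omega⟩ : Fin n) 1, by simp⟩

/-- The two singular-value inequalities `J ≤ ‖A‖^{n-1} l` and `‖A‖ l^{n-1} ≤ J`,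
together with positivity of `l`. -/
private lemma keyIneq (hn : 2 ≤ n)
    (A : EuclideanSpace ℝ (Fin n) →L[ℝ] EuclideanSpace ℝ (Fin n)) (hJ : 0 < jac A) :
    0 < minStretch A ∧
    jac A ≤ maxStretch A ^ (n - 1) * minStretch A ∧
    maxStretch A * minStretch A ^ (n - 1) ≤ jac A := by
  have hfr : Module.finrank ℝ (EuclideanSpace ℝ (Fin n)) = n := finrank_euclideanSpace_fin
  set A' := (A : EuclideanSpace ℝ (Fin n) →ₗ[ℝ] EuclideanSpace ℝ (Fin n)) with hA'
  set T := LinearMap.adjoint A' * A' with hTdef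
  have hT : T.IsSymmetric := LinearMap.isSymmetric_adjoint_mul_self A'
  set b := hT.eigenvectorBasis hfr with hb
  set μ := hT.eigenvalues hfr with hμ
  have h1 : ∀ h : EuclideanSpace ℝ (Fin n), (inner ℝ (T h) h : ℝ) = ‖A h‖ ^ 2 := by
    intro h
    rw [hTdef]
    simp only [Module.End.mul_apply, LinearMap.adjoint_inner_left]
    rw [← real_inner_self_eq_norm_sq]
    rfl
  have h2 : ∀ i, μ i = ‖A (b i)‖ ^ 2 := by
    intro i
    rw [← h1, hT.apply_eigenvectorBasis, real_inner_smul_left, real_inner_self_eq_norm_sq,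
      b.orthonormal.1 i]
    simp [hμ]
  have h3 : ∀ h : EuclideanSpace ℝ (Fin n), ‖A h‖ ^ 2 = ∑ i, μ i * (b.repr h i) ^ 2 := by
    intro h
    rw [← h1, ← b.repr.inner_map_map (T h) h]
    rw [PiLp.inner_apply]
    congr 1; ext i
    rw [hT.eigenvectorBasis_apply_self_apply]
    simp [sq]; ring
  have h3' : ∀ h : EuclideanSpace ℝ (Fin n), ‖h‖ ^ 2 = ∑ i, (b.repr h i) ^ 2 := by
    intro h
    rw [← real_inner_self_eq_norm_sq, ← b.repr.inner_map_map h h, PiLp.inner_apply]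
    congr 1; ext i; simp [sq]
  have h4 : LinearMap.det T = ∏ i, μ i := by
    have hdiag : LinearMap.toMatrix b.toBasis b.toBasis T = Matrix.diagonal μ := by
      ext i j
      rw [LinearMap.toMatrix_apply, OrthonormalBasis.coe_toBasis,
        hT.apply_eigenvectorBasis, _root_.map_smul]
      by_cases hij : i = j <;>
        simp [Matrix.diagonal, hij, ← hb, ← hμ, OrthonormalBasis.coe_toBasis_repr_apply,
          OrthonormalBasis.repr_self, EuclideanSpace.single_apply, eq_comm]
    rw [← LinearMap.det_toMatrix b.toBasis, hdiag, Matrix.det_diagonal]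
  have h5 : LinearMap.det T = (LinearMap.det A') ^ 2 := by
    rw [hTdef, map_mul]
    have : LinearMap.det (LinearMap.adjoint A') = LinearMap.det A' := by
      rw [← LinearMap.det_toMatrix b.toBasis, LinearMap.toMatrix_adjoint b b,
        Matrix.det_conjTranspose, ← LinearMap.det_toMatrix b.toBasis A']
      simp
    rw [this]; ring
  have hjac : jac A = LinearMap.det A' := rfl
  -- bounds on eigenvalues
  have hμ0 : ∀ i, 0 ≤ μ i := fun i => (h2 i) ▸ sq_nonneg _
  have hμmax : ∀ i, μ i ≤ maxStretch A ^ 2 := by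
    intro i
    rw [h2 i]
    exact pow_le_pow_left₀ (norm_nonneg _) (le_maxStretch A (b i) (b.orthonormal.1 i)) 2
  have hμmin : ∀ i, minStretch A ^ 2 ≤ μ i := by
    intro i
    rw [h2 i]
    have hSne' : {r : ℝ | ∃ h : EuclideanSpace ℝ (Fin n), ‖h‖ = 1 ∧ r = ‖A h‖}.Nonempty := by
      obtain ⟨h, hh⟩ := exists_unit hn
      exact ⟨‖A h‖, h, hh, rfl⟩
    have h0l : 0 ≤ minStretch A :=
      le_csInf hSne' (by rintro r ⟨h, -, rfl⟩; exact norm_nonneg _)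
    exact pow_le_pow_left₀ h0l (minStretch_le A (b i) (b.orthonormal.1 i)) 2
  -- extremal eigenvalues
  have hne : Nonempty (Fin n) := ⟨⟨0, by omega⟩⟩
  have hSne : {r : ℝ | ∃ h : EuclideanSpace ℝ (Fin n), ‖h‖ = 1 ∧ r = ‖A h‖}.Nonempty := by
    obtain ⟨h, hh⟩ := exists_unit hn
    exact ⟨‖A h‖, h, hh, rfl⟩
  obtain ⟨h0, hh0, hmin_eq⟩ : ∃ h, ‖h‖ = 1 ∧ minStretch A = ‖A h‖ :=
    (stretchSet_compact A).sInf_mem hSne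
  obtain ⟨h1u, hh1, hmax_eq⟩ : ∃ h, ‖h‖ = 1 ∧ maxStretch A = ‖A h‖ :=
    (stretchSet_compact A).sSup_mem hSne
  obtain ⟨i0, -, hi0⟩ := Finset.exists_min_image Finset.univ μ
    ⟨(⟨0, by omega⟩ : Fin n), Finset.mem_univ _⟩
  obtain ⟨i1, -, hi1⟩ := Finset.exists_max_image Finset.univ μ
    ⟨(⟨0, by omega⟩ : Fin n), Finset.mem_univ _⟩
  have hsum : ∀ h : EuclideanSpace ℝ (Fin n), ‖h‖ = 1 → ∑ i, (b.repr h i) ^ 2 = 1 := by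
    intro h hh
    rw [← h3' h, hh, one_pow]
  have hμi0 : μ i0 ≤ minStretch A ^ 2 := by
    calc μ i0 = ∑ i, μ i0 * (b.repr h0 i) ^ 2 := by
          rw [← Finset.mul_sum, hsum h0 hh0, mul_one]
      _ ≤ ∑ i, μ i * (b.repr h0 i) ^ 2 :=
          Finset.sum_le_sum fun i _ =>
            mul_le_mul_of_nonneg_right (hi0 i (Finset.mem_univ i)) (sq_nonneg _)
      _ = minStretch A ^ 2 := by rw [hmin_eq, h3]
  have hμi1 : maxStretch A ^ 2 ≤ μ i1 := by
    calc maxStretch A ^ 2 = ∑ i, μ i * (b.repr h1u i) ^ 2 := by rw [hmax_eq, h3]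
      _ ≤ ∑ i, μ i1 * (b.repr h1u i) ^ 2 :=
          Finset.sum_le_sum fun i _ =>
            mul_le_mul_of_nonneg_right (hi1 i (Finset.mem_univ i)) (sq_nonneg _)
      _ = μ i1 := by rw [← Finset.mul_sum, hsum h1u hh1, mul_one]
  -- nonnegativity of min/max stretch
  have hl0 : 0 ≤ minStretch A := hmin_eq ▸ norm_nonneg _
  have hm0 : 0 ≤ maxStretch A := hmax_eq ▸ norm_nonneg _
  -- product bounds
  have hcard0 : (Finset.univ.erase i0).card = n - 1 := by
    rw [Finset.card_erase_of_mem (Finset.mem_univ i0), Finset.card_univ, Fintype.card_fin]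
  have hcard1 : (Finset.univ.erase i1).card = n - 1 := by
    rw [Finset.card_erase_of_mem (Finset.mem_univ i1), Finset.card_univ, Fintype.card_fin]
  have hprodA : ∏ i, μ i ≤ minStretch A ^ 2 * (maxStretch A ^ 2) ^ (n - 1) := by
    rw [← Finset.mul_prod_erase Finset.univ μ (Finset.mem_univ i0)]
    have hrest : ∏ i ∈ Finset.univ.erase i0, μ i ≤ (maxStretch A ^ 2) ^ (n - 1) := by
      calc ∏ i ∈ Finset.univ.erase i0, μ i
          ≤ ∏ _i ∈ Finset.univ.erase i0, maxStretch A ^ 2 :=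
            Finset.prod_le_prod (fun i _ => hμ0 i) (fun i _ => hμmax i)
        _ = (maxStretch A ^ 2) ^ (n - 1) := by rw [Finset.prod_const, hcard0]
    exact mul_le_mul hμi0 hrest (Finset.prod_nonneg fun i _ => hμ0 i) (sq_nonneg _)
  have hprodB : maxStretch A ^ 2 * (minStretch A ^ 2) ^ (n - 1) ≤ ∏ i, μ i := by
    rw [← Finset.mul_prod_erase Finset.univ μ (Finset.mem_univ i1)]
    have hrest : (minStretch A ^ 2) ^ (n - 1) ≤ ∏ i ∈ Finset.univ.erase i1, μ i := by
      calc (minStretch A ^ 2) ^ (n - 1)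
          = ∏ _i ∈ Finset.univ.erase i1, minStretch A ^ 2 := by rw [Finset.prod_const, hcard1]
        _ ≤ ∏ i ∈ Finset.univ.erase i1, μ i :=
            Finset.prod_le_prod (fun i _ => sq_nonneg _) (fun i _ => hμmin i)
    exact mul_le_mul hμi1 hrest (pow_nonneg (sq_nonneg _) _) (le_trans (sq_nonneg _) hμi1)
  -- squared forms
  have hsqA : jac A ^ 2 ≤ (maxStretch A ^ (n - 1) * minStretch A) ^ 2 := by
    calc jac A ^ 2 = ∏ i, μ i := by rw [hjac, ← h5, h4]
      _ ≤ minStretch A ^ 2 * (maxStretch A ^ 2) ^ (n - 1) := hprodA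
      _ = (maxStretch A ^ (n - 1) * minStretch A) ^ 2 := by ring
  have hsqB : (maxStretch A * minStretch A ^ (n - 1)) ^ 2 ≤ jac A ^ 2 := by
    calc (maxStretch A * minStretch A ^ (n - 1)) ^ 2
        = maxStretch A ^ 2 * (minStretch A ^ 2) ^ (n - 1) := by ring
      _ ≤ ∏ i, μ i := hprodB
      _ = jac A ^ 2 := by rw [hjac, ← h5, h4]
  have hA1 : jac A ≤ maxStretch A ^ (n - 1) * minStretch A := by
    have := Real.sqrt_le_sqrt hsqA
    rwa [Real.sqrt_sq hJ.le, Real.sqrt_sq (mul_nonneg (pow_nonneg hm0 _) hl0)] at this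
  have hB1 : maxStretch A * minStretch A ^ (n - 1) ≤ jac A := by
    have := Real.sqrt_le_sqrt hsqB
    rwa [Real.sqrt_sq hJ.le, Real.sqrt_sq (mul_nonneg hm0 (pow_nonneg hl0 _))] at this
  have hlpos : 0 < minStretch A := by
    rcases hl0.lt_or_eq with h | h
    · exact h
    · exfalso
      rw [← h, mul_zero] at hA1
      exact absurd (lt_of_lt_of_le hJ hA1) (lt_irrefl 0)
  exact ⟨hlpos, hA1, hB1⟩

private lemma rpow_aux {a b : ℝ} {n : ℕ} (hn : 2 ≤ n) (ha : 0 ≤ a) (hb : 0 ≤ b)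
    (h : a ≤ b ^ (n - 1)) : a ^ ((1 : ℝ) / ((n : ℝ) - 1)) ≤ b := by
  have h2n : (2 : ℝ) ≤ (n : ℝ) := by exact_mod_cast hn
  have hne : ((n : ℝ) - 1) ≠ 0 := by linarith
  have hαnn : (0 : ℝ) ≤ 1 / ((n : ℝ) - 1) := by
    apply one_div_nonneg.mpr; linarith
  have hcast : ((n - 1 : ℕ) : ℝ) = (n : ℝ) - 1 := by
    rw [Nat.cast_sub (by omega)]; simp
  calc a ^ ((1 : ℝ) / ((n : ℝ) - 1)) ≤ (b ^ (n - 1)) ^ ((1 : ℝ) / ((n : ℝ) - 1)) :=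
        Real.rpow_le_rpow ha h hαnn
    _ = b := by
        rw [← Real.rpow_natCast b (n - 1), ← Real.rpow_mul hb, hcast,
          mul_one_div, div_self hne, Real.rpow_one]

end Aux

/-- chain of inequalities between dilatations at a regular point. -/
theorem stmt0 {n : ℕ} (hn : 2 ≤ n)
    (f : EuclideanSpace ℝ (Fin n) → EuclideanSpace ℝ (Fin n))
    (x x₀ : EuclideanSpace ℝ (Fin n)) (hx : x₀ ≠ x)
    (hdiff : DifferentiableAt ℝ f x) (hJ : 0 < jac (fderiv ℝ f x)) :
    1 / Kdil (fderiv ℝ f x) ≤ 1 / Ldil (fderiv ℝ f x) ^ ((1:ℝ)/((n:ℝ)-1)) ∧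
    1 / Ldil (fderiv ℝ f x) ^ ((1:ℝ)/((n:ℝ)-1)) ≤
      1 / Ddil (fderiv ℝ f x) (‖x - x₀‖⁻¹ • (x - x₀)) ^ ((1:ℝ)/((n:ℝ)-1)) ∧
    1 / Ddil (fderiv ℝ f x) (‖x - x₀‖⁻¹ • (x - x₀)) ^ ((1:ℝ)/((n:ℝ)-1)) ≤
      Qdil (fderiv ℝ f x) (‖x - x₀‖⁻¹ • (x - x₀)) ∧
    Qdil (fderiv ℝ f x) (‖x - x₀‖⁻¹ • (x - x₀)) ≤ Kdil (fderiv ℝ f x) ^ ((1:ℝ)/((n:ℝ)-1)) ∧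
    Kdil (fderiv ℝ f x) ^ ((1:ℝ)/((n:ℝ)-1)) ≤ Ldil (fderiv ℝ f x) := by
  set A := fderiv ℝ f x with hA
  set u := ‖x - x₀‖⁻¹ • (x - x₀) with hu
  have hxx : x - x₀ ≠ 0 := sub_ne_zero.mpr (Ne.symm hx)
  have hun : ‖u‖ = 1 := by
    rw [hu, norm_smul, norm_inv, norm_norm, inv_mul_cancel₀ (norm_ne_zero_iff.mpr hxx)]
  obtain ⟨hlpos, hA1, hB1⟩ := keyIneq hn A hJ
  set m := maxStretch A with hm
  set l := minStretch A with hl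
  set J := jac A with hJdef
  -- basic positivity and ordering
  have hlu : l ≤ ‖A u‖ := minStretch_le A u hun
  have hum : ‖A u‖ ≤ m := le_maxStretch A u hun
  have hmpos : 0 < m := lt_of_lt_of_le hlpos (le_trans hlu hum)
  -- angular quantity
  have hinneruu : (inner ℝ u u : ℝ) = 1 := by
    rw [real_inner_self_eq_norm_sq, hun, one_pow]
  have hmemu : ‖A u‖ ∈ {r : ℝ | ∃ h : EuclideanSpace ℝ (Fin n),
      ‖h‖ = 1 ∧ (inner ℝ h u : ℝ) ≠ 0 ∧ r = ‖A h‖ / |(inner ℝ h u : ℝ)|} := by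
    refine ⟨u, hun, by rw [hinneruu]; norm_num, ?_⟩
    rw [hinneruu]
    norm_num
  have hlbd : ∀ r ∈ {r : ℝ | ∃ h : EuclideanSpace ℝ (Fin n),
      ‖h‖ = 1 ∧ (inner ℝ h u : ℝ) ≠ 0 ∧ r = ‖A h‖ / |(inner ℝ h u : ℝ)|}, l ≤ r := by
    rintro r ⟨h, hh, hcne, rfl⟩
    have hcs : |(inner ℝ h u : ℝ)| ≤ 1 := by
      calc |(inner ℝ h u : ℝ)| ≤ ‖h‖ * ‖u‖ := abs_real_inner_le_norm h u
        _ = 1 := by rw [hh, hun, mul_one]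
    have hcpos : 0 < |(inner ℝ h u : ℝ)| := abs_pos.mpr hcne
    have h1 : l ≤ ‖A h‖ := minStretch_le A h hh
    have h2 : ‖A h‖ ≤ ‖A h‖ / |(inner ℝ h u : ℝ)| := by
      rw [le_div_iff₀ hcpos]
      exact mul_le_of_le_one_right (norm_nonneg _) hcs
    linarith
  have hl_ell : l ≤ ellAng A u := le_csInf ⟨_, hmemu⟩ hlbd
  have hell_q : ellAng A u ≤ ‖A u‖ := csInf_le ⟨l, hlbd⟩ hmemu
  have hellpos : 0 < ellAng A u := lt_of_lt_of_le hlpos hl_ell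
  set q := ‖A u‖ with hq
  set le := ellAng A u with hle
  -- dilatation positivity
  have hKpos : 0 < m ^ n / J := div_pos (pow_pos hmpos n) hJ
  have hLpos : 0 < J / l ^ n := div_pos hJ (pow_pos hlpos n)
  have hDpos : 0 < J / le ^ n := div_pos hJ (pow_pos hellpos n)
  have hqpos : 0 < q := lt_of_lt_of_le hlpos hlu
  have h2n : (2 : ℝ) ≤ (n : ℝ) := by exact_mod_cast hn
  have hαnn : (0 : ℝ) ≤ 1 / ((n : ℝ) - 1) := by
    apply one_div_nonneg.mpr; linarith
  have hnn1 : n - 1 + 1 = n := by omega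
  -- L ≤ K^(n-1)
  have hLK : J / l ^ n ≤ (m ^ n / J) ^ (n - 1) := by
    rw [div_pow, div_le_div_iff₀ (pow_pos hlpos n) (pow_pos hJ (n - 1))]
    have hJn : J ^ n ≤ (m ^ (n - 1) * l) ^ n := pow_le_pow_left₀ hJ.le hA1 n
    calc J * J ^ (n - 1) = J ^ n := by rw [← pow_succ', hnn1]
      _ ≤ (m ^ (n - 1) * l) ^ n := hJn
      _ = (m ^ n) ^ (n - 1) * l ^ n := by ring
  -- K ≤ L^(n-1)
  have hKL : m ^ n / J ≤ (J / l ^ n) ^ (n - 1) := by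
    rw [div_pow, div_le_div_iff₀ hJ (pow_pos (pow_pos hlpos n) (n - 1))]
    have hJn : (m * l ^ (n - 1)) ^ n ≤ J ^ n := pow_le_pow_left₀
      (mul_nonneg hmpos.le (pow_nonneg hlpos.le _)) hB1 n
    calc m ^ n * (l ^ n) ^ (n - 1) = (m * l ^ (n - 1)) ^ n := by ring
      _ ≤ J ^ n := hJn
      _ = J ^ (n - 1) * J := by rw [mul_comm, ← pow_succ', hnn1]
  -- the rpow consequences
  have hLαK : (J / l ^ n) ^ ((1 : ℝ) / ((n : ℝ) - 1)) ≤ m ^ n / J :=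
    rpow_aux hn hLpos.le hKpos.le hLK
  have hKαL : (m ^ n / J) ^ ((1 : ℝ) / ((n : ℝ) - 1)) ≤ J / l ^ n :=
    rpow_aux hn hKpos.le hLpos.le hKL
  -- D ≤ L
  have hDL : J / le ^ n ≤ J / l ^ n :=
    div_le_div_of_nonneg_left hJ.le (pow_pos hlpos n) (pow_le_pow_left₀ hlpos.le hl_ell n)
  have hDLα : (J / le ^ n) ^ ((1 : ℝ) / ((n : ℝ) - 1)) ≤ (J / l ^ n) ^ ((1 : ℝ) / ((n : ℝ) - 1)) :=
    Real.rpow_le_rpow hDpos.le hDL hαnn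
  have hDαpos : 0 < (J / le ^ n) ^ ((1 : ℝ) / ((n : ℝ) - 1)) := Real.rpow_pos_of_pos hDpos _
  have hLαpos : 0 < (J / l ^ n) ^ ((1 : ℝ) / ((n : ℝ) - 1)) := Real.rpow_pos_of_pos hLpos _
  -- 1/D^α = (le^n/J)^α
  have hinvD : (1 : ℝ) / (J / le ^ n) ^ ((1 : ℝ) / ((n : ℝ) - 1))
      = (le ^ n / J) ^ ((1 : ℝ) / ((n : ℝ) - 1)) := by
    have e : le ^ n / J = 1 / (J / le ^ n) := by rw [one_div_div]
    rw [e, Real.div_rpow (by norm_num) hDpos.le, Real.one_rpow]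
  refine ⟨?_, ?_, ?_, ?_, ?_⟩
  · -- 1/K ≤ 1/L^α
    show (1 : ℝ) / (m ^ n / J) ≤ 1 / (J / l ^ n) ^ ((1 : ℝ) / ((n : ℝ) - 1))
    exact one_div_le_one_div_of_le hLαpos hLαK
  · -- 1/L^α ≤ 1/D^α
    show (1 : ℝ) / (J / l ^ n) ^ ((1 : ℝ) / ((n : ℝ) - 1))
      ≤ 1 / (J / le ^ n) ^ ((1 : ℝ) / ((n : ℝ) - 1))
    exact one_div_le_one_div_of_le hDαpos hDLα
  · -- 1/D^α ≤ Q
    show (1 : ℝ) / (J / le ^ n) ^ ((1 : ℝ) / ((n : ℝ) - 1))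
      ≤ (q ^ n / J) ^ ((1 : ℝ) / ((n : ℝ) - 1))
    rw [hinvD]
    refine Real.rpow_le_rpow (by positivity) ?_ hαnn
    exact div_le_div_of_nonneg_right (pow_le_pow_left₀ hellpos.le hell_q n) hJ.le
  · -- Q ≤ K^α
    show (q ^ n / J) ^ ((1 : ℝ) / ((n : ℝ) - 1)) ≤ (m ^ n / J) ^ ((1 : ℝ) / ((n : ℝ) - 1))
    refine Real.rpow_le_rpow (by positivity) ?_ hαnn
    exact div_le_div_of_nonneg_right (pow_le_pow_left₀ hqpos.le hum n) hJ.le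
  · -- K^α ≤ L
    show (m ^ n / J) ^ ((1 : ℝ) / ((n : ℝ) - 1)) ≤ J / l ^ n
    exact hKαL
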